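/- GreedyJR is not strategyproof: there is an instance with 5 voters and 2 rounds where one voter strictly increases total satisfaction by misreporting in round 1. -/

import Mathlib

open scoped Classical

noncomputable section

/-- A one-round approval profile: each of the `n` voters approves a finite set of
alternatives (alternatives are natural numbers). -/
abbrev Profile (n : ℕ) := Fin n → Finset ℕ

/-- An online temporal voting rule: given the round index `t` and the (infinite
sequence of) approval profiles, it returns the winning alternative of round `t`.
Online rules only look at rounds `0,…,t`. -/
abbrev VRule (n : ℕ) := ℕ → (ℕ → Profile n) → ℕ

/-- Replace voter `i`'s approval set in round `t` by `S`, keeping everything else. -/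
def updateRound {n : ℕ} (A : ℕ → Profile n) (t : ℕ) (i : Fin n) (S : Finset ℕ) :
    ℕ → Profile n :=
  fun s => if s = t then Function.update (A s) i S else A s

/-- A rule is online if the round-`t` winner only depends on rounds `0,…,t`. -/
def OnlineRule {n : ℕ} (R : VRule n) : Prop :=
  ∀ (t : ℕ) (A B : ℕ → Profile n), (∀ s, s ≤ t → A s = B s) → R t A = R t B

/-- Monotonicity: if `c` wins round `t`, adding `c` to any voter's round-`t`
approval set keeps `c` the round-`t` winner. -/
def IsMonotone {n : ℕ} (R : VRule n) : Prop :=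
  ∀ (A : ℕ → Profile n) (t : ℕ) (i : Fin n),
    R t (updateRound A t i (A t i ∪ {R t A})) = R t A

/-- Online independence of irrelevant alternatives: removing a non-winning
alternative `d` from any single voter's round-`t` approvals keeps the winner. -/
def OIIA {n : ℕ} (R : VRule n) : Prop :=
  ∀ (A : ℕ → Profile n) (t : ℕ) (i : Fin n) (d : ℕ), d ≠ R t A →
    R t (updateRound A t i ((A t i).erase d)) = R t A

/-- Online strategyproofness: fixing previous rounds and the other voters, no
misreport `S` by voter `i` in round `t` can turn the round-`t` winner from a
(truthfully) unapproved alternative into an approved one. -/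
def OSP {n : ℕ} (R : VRule n) : Prop :=
  ∀ (A : ℕ → Profile n) (t : ℕ) (i : Fin n) (S : Finset ℕ),
    R t (updateRound A t i S) ∈ A t i → R t A ∈ A t i

/-- `B` deviates from `A` only in voter `i`'s reports. -/
def Deviation {n : ℕ} (i : Fin n) (A B : ℕ → Profile n) : Prop :=
  ∀ (t : ℕ) (j : Fin n), j ≠ i → B t j = A t j

/-- Satisfaction of the group `G` over rounds `0,…,T-1`: the number of rounds in
which the winner under the reported profile `B` is approved (in the reference,
e.g. truthful, profile `A`) by some member of `G`. -/
def satAgainst {n : ℕ} (R : VRule n) (B A : ℕ → Profile n) (T : ℕ)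
    (G : Finset (Fin n)) : ℕ :=
  ((Finset.range T).filter fun t => ∃ i ∈ G, R t B ∈ A t i).card

/-- (Full) strategyproofness: no unilateral misreport strictly increases a
voter's total satisfaction, measured against their truthful approvals. -/
def SP {n : ℕ} (R : VRule n) : Prop :=
  ∀ (A B : ℕ → Profile n) (i : Fin n) (T : ℕ), Deviation i A B →
    satAgainst R B A T {i} ≤ satAgainst R A A T {i}

/-- `G` is `ℓ`-cohesive in the first `T` rounds of `A`: in some `ℓ` rounds all
members of `G` approve a common alternative. -/
def Cohesive {n : ℕ} (A : ℕ → Profile n) (T : ℕ) (G : Finset (Fin n)) (ℓ : ℕ) : Prop :=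
  ∃ Rs : Finset ℕ, Rs ⊆ Finset.range T ∧ Rs.card = ℓ ∧
    ∀ t ∈ Rs, ∃ c, ∀ i ∈ G, c ∈ A t i

/-- Justified representation. -/
def SatisfiesJR {n : ℕ} (R : VRule n) : Prop :=
  ∀ (A : ℕ → Profile n) (T : ℕ) (G : Finset (Fin n)) (ℓ : ℕ),
    Cohesive A T G ℓ → min 1 (ℓ * G.card / n) ≤ satAgainst R A A T G

/-- Proportional justified representation. -/
def SatisfiesPJR {n : ℕ} (R : VRule n) : Prop :=
  ∀ (A : ℕ → Profile n) (T : ℕ) (G : Finset (Fin n)) (ℓ : ℕ),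
    Cohesive A T G ℓ → ℓ * G.card / n ≤ satAgainst R A A T G

end
noncomputable section

/-- Score of alternative `c`: sum of `max 0 (weight)` over approving voters. -/
def wamScore {n : ℕ} (w : Fin n → ℝ) (Ap : Profile n) (c : ℕ) : ℝ :=
  ∑ i, if c ∈ Ap i then max 0 (w i) else 0

/-- The winner of a Weighted Approval Method round: the lexicographically first
alternative of `Ct` with maximum score. -/
def wamWinner {n : ℕ} (w : Fin n → ℝ) (Ap : Profile n) (Ct : Finset ℕ) : ℕ :=
  sInf {c : ℕ | c ∈ Ct ∧ ∀ c' ∈ Ct, wamScore w Ap c' ≤ wamScore w Ap c}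

/-- The voters' weights at the start of round `t`, for a WAM with weight-update
functions `f` (for satisfied voters) and `g` (for unsatisfied voters), initial
weights `α0`, alternative sets `C` and approval profiles `A`. -/
def wamW {n : ℕ} (f g : ℝ → ℝ) (α0 : Fin n → ℝ) (C : ℕ → Finset ℕ)
    (A : ℕ → Profile n) : ℕ → Fin n → ℝ
  | 0 => α0
  | t + 1 => fun i =>
      if wamWinner (wamW f g α0 C A t) (A t) (C t) ∈ A t i then
        f (wamW f g α0 C A t i)
      else g (wamW f g α0 C A t i)

/-- The Weighted Approval Method as an online voting rule. -/
def wamRule {n : ℕ} (f g : ℝ → ℝ) (α0 : Fin n → ℝ) (C : ℕ → Finset ℕ) : VRule n :=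
  fun t A => wamWinner (wamW f g α0 C A t) (A t) (C t)

/-- GreedyJR: the WAM with `f = 0`, `g = id` and all initial weights `1`. -/
def greedyJR {n : ℕ} (C : ℕ → Finset ℕ) : VRule n :=
  wamRule (fun _ => 0) id (fun _ => 1) C

end
noncomputable section NotSP

def Av : ℕ → Profile 5 := fun t =>
  if t = 0 then ![{1},{1},{1},{3},{2}] else ![{1},{1},{3},{3},{2}]

def Bv : ℕ → Profile 5 := fun t =>
  if t = 0 then ![{1},{1},{4},{3},{2}] else ![{1},{1},{3},{3},{2}]

lemma wamWinner_eq {n : ℕ} (w : Fin n → ℝ) (Ap : Profile n) (Ct : Finset ℕ)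
    (c : ℕ) (hc : c ∈ Ct) (hmax : ∀ c' ∈ Ct, wamScore w Ap c' ≤ wamScore w Ap c)
    (hmin : ∀ m, m ∈ Ct → (∀ c' ∈ Ct, wamScore w Ap c' ≤ wamScore w Ap m) → c ≤ m) :
    wamWinner w Ap Ct = c := by
  refine le_antisymm (Nat.sInf_le ⟨hc, hmax⟩) (le_csInf ⟨c, hc, hmax⟩ ?_)
  rintro m ⟨hm, hmm⟩
  exact hmin m hm hmm

def Cc : ℕ → Finset ℕ := fun _ => ({1, 2, 3, 4} : Finset ℕ)

lemma winA0 : greedyJR Cc 0 Av = 1 := by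
  show wamWinner _ _ _ = 1
  apply wamWinner_eq
  · decide
  · intro c' hc'
    fin_cases hc' <;>
      simp [wamScore, Fin.sum_univ_five, Av, Matrix.cons_val_zero, Matrix.cons_val_one,
        wamW, Finset.mem_insert, Finset.mem_singleton] <;> decide
  · intro m hm hmm
    fin_cases hm <;> omega

lemma wA1 : wamW (fun _ => 0) id (fun _ => 1) Cc Av 1 = ![0,0,0,1,1] := by
  funext i
  have h0 : wamW (fun _ => 0) id (fun _ => (1:ℝ)) Cc Av 0 = fun _ => 1 := rfl
  have : wamWinner (wamW (fun _ => 0) id (fun _ => (1:ℝ)) Cc Av 0) (Av 0) (Cc 0) = 1 := winA0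
  show (if _ then _ else _) = _
  rw [this]
  fin_cases i <;> simp [Av, wamW, Matrix.cons_val_zero, Matrix.cons_val_one]

lemma winA1 : greedyJR Cc 1 Av = 2 := by
  show wamWinner _ _ _ = 2
  rw [show (wamW (fun _ => 0) id (fun _ => (1:ℝ)) Cc Av 1) = ![0,0,0,1,1] from wA1]
  apply wamWinner_eq
  · decide
  · intro c' hc'
    fin_cases hc' <;>
      simp [wamScore, Fin.sum_univ_five, Av, Matrix.cons_val_zero, Matrix.cons_val_one] <;>
      norm_num
  · intro m hm hmm
    fin_cases hm
    · exfalso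
      have := hmm 2 (by decide)
      simp [wamScore, Fin.sum_univ_five, Av, Matrix.cons_val_zero, Matrix.cons_val_one] at this
      norm_num at this
    all_goals omega

lemma winB0 : greedyJR Cc 0 Bv = 1 := by
  show wamWinner _ _ _ = 1
  apply wamWinner_eq
  · decide
  · intro c' hc'
    fin_cases hc' <;>
      simp [wamScore, Fin.sum_univ_five, Bv, Matrix.cons_val_zero, Matrix.cons_val_one,
        wamW] <;> decide
  · intro m hm hmm
    fin_cases hm <;> omega

lemma wB1 : wamW (fun _ => 0) id (fun _ => 1) Cc Bv 1 = ![0,0,1,1,1] := by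
  funext i
  have : wamWinner (wamW (fun _ => 0) id (fun _ => (1:ℝ)) Cc Bv 0) (Bv 0) (Cc 0) = 1 := winB0
  show (if _ then _ else _) = _
  rw [this]
  fin_cases i <;> simp [Bv, wamW, Matrix.cons_val_zero, Matrix.cons_val_one]

lemma winB1 : greedyJR Cc 1 Bv = 3 := by
  show wamWinner _ _ _ = 3
  rw [show (wamW (fun _ => 0) id (fun _ => (1:ℝ)) Cc Bv 1) = ![0,0,1,1,1] from wB1]
  apply wamWinner_eq
  · decide
  · intro c' hc'
    fin_cases hc' <;>
      simp [wamScore, Fin.sum_univ_five, Bv, Matrix.cons_val_zero, Matrix.cons_val_one] <;>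
      norm_num
  · intro m hm hmm
    fin_cases hm
    · exfalso
      have := hmm 3 (by decide)
      simp [wamScore, Fin.sum_univ_five, Bv, Matrix.cons_val_zero, Matrix.cons_val_one] at this
      norm_num at this
    · exfalso
      have := hmm 3 (by decide)
      simp [wamScore, Fin.sum_univ_five, Bv, Matrix.cons_val_zero, Matrix.cons_val_one] at this
      norm_num at this
    all_goals omega

end NotSP

theorem greedyJR_not_SP :
    ∃ (A B : ℕ → Profile 5) (i : Fin 5), Deviation i A B ∧
      (∀ t, t ≠ 0 → B t = A t) ∧
      satAgainst (greedyJR fun _ => ({1, 2, 3, 4} : Finset ℕ)) A A 2 {i} <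
        satAgainst (greedyJR fun _ => ({1, 2, 3, 4} : Finset ℕ)) B A 2 {i} := by
  refine ⟨Av, Bv, 2, ?_, ?_, ?_⟩
  · intro t j hj
    unfold Av Bv
    by_cases ht : t = 0 <;> simp [ht] <;> fin_cases j <;> simp_all <;> rfl
  · intro t ht
    unfold Av Bv
    simp [ht]
  · have e : (fun _ => ({1,2,3,4} : Finset ℕ)) = Cc := rfl
    rw [e]
    have satA : satAgainst (greedyJR Cc) Av Av 2 {2} = 1 := by
      unfold satAgainst
      rw [show Finset.range 2 = {0, 1} from rfl]
      rw [Finset.filter_insert, Finset.filter_singleton]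
      simp only [winA0, winA1, Finset.mem_singleton]
      norm_num [Av]
      simp [Matrix.cons_val_two, Matrix.vecHead, Matrix.vecTail]
    have satB : satAgainst (greedyJR Cc) Bv Av 2 {2} = 2 := by
      unfold satAgainst
      rw [show Finset.range 2 = {0, 1} from rfl]
      rw [Finset.filter_insert, Finset.filter_singleton]
      simp only [winB0, winB1, Finset.mem_singleton]
      norm_num [Av]
      simp [Matrix.cons_val_two, Matrix.vecHead, Matrix.vecTail]
    rw [satA, satB]
    omega
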